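/- arXiv:1408.1801 — 4 statements merged into one kernel-verified Lean document; each statement's English description precedes it below -/
import Mathlib

section
/- The function F(t, y; Λ) has one-sided continuity in y ∈ V in the direction φ: for every y ∈ V and every fixed t in a sufficiently small neighborhood of the origin of ℂ^{♯Λ}, lim_{c→0+} F(t, y + cφ; Λ) = F(t, y; Λ). -/
open scoped Real Pointwise Classical
open Filter

noncomputable section

namespace Stmt

abbrev Lam (r : ℕ) := (Fin r → ℤ) × ℂ

variable {r : ℕ}

def vecR (f : Lam r) : Fin r → ℝ := fun i => (f.1 i : ℝ)

def dot (x y : Fin r → ℝ) : ℝ := ∑ i, x i * y i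

def intCast' (v : Fin r → ℤ) : Fin r → ℝ := fun i => (v i : ℝ)

def intLattice (r : ℕ) : Set (Fin r → ℝ) := Set.range (intCast' (r := r))

def fval (f : Lam r) (v : Fin r → ℤ) : ℂ := ((∑ i, f.1 i * v i : ℤ) : ℂ) + f.2

def twoPiI : ℂ := 2 * Real.pi * Complex.I

def zrank (S : Set (Fin r → ℤ)) : ℕ := Module.finrank ℤ (Submodule.span ℤ S)

def vecSet (Λ : Finset (Lam r)) : Set (Fin r → ℤ) := Prod.fst '' (Λ : Set (Lam r))

def fullRank (Λ : Finset (Lam r)) : Prop := zrank (vecSet Λ) = r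

def tildeSet (Λ : Finset (Lam r)) : Set (Lam r) :=
  {f ∈ (Λ : Set (Lam r)) | zrank (vecSet Λ \ {f.1}) ≠ r}

def hyp (H : Finset (Lam r)) : Set (Fin r → ℝ) :=
  (Submodule.span ℝ (vecR '' (H : Set (Lam r))) : Submodule ℝ (Fin r → ℝ))

def isBasisSet (r : ℕ) (B : Finset (Lam r)) : Prop :=
  B.card = r ∧ LinearIndependent ℝ (fun f : B => vecR (f : Lam r))

def isRSet (r : ℕ) (R : Finset (Lam r)) : Prop :=
  R.card = r - 1 ∧ LinearIndependent ℝ (fun f : R => vecR (f : Lam r))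

def goodPhi (Λ : Finset (Lam r)) (φ : Fin r → ℝ) : Prop :=
  ∀ R ⊆ Λ, isRSet r R → φ ∉ hyp R

def dualVec (B : Finset (Lam r)) (f : Lam r) : Fin r → ℝ :=
  if h : ∃ u : Fin r → ℝ, ∀ g ∈ B, dot (vecR g) u = if g = f then 1 else 0
  then h.choose else 0

def mfract (φ : Fin r → ℝ) (B : Finset (Lam r)) (f : Lam r) (y : Fin r → ℝ) : ℝ :=
  if 0 < dot φ (dualVec B f) then Int.fract (dot y (dualVec B f))
  else 1 - Int.fract (- dot y (dualVec B f))

abbrev quotB (B : Finset (Lam r)) : Type := (Fin r → ℤ) ⧸ Submodule.span ℤ (vecSet B)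

def basisFinsets (Λ : Finset (Lam r)) : Finset (Finset (Lam r)) :=
  Λ.powerset.filter (fun B => isBasisSet r B)

def Fgen (Λ : Finset (Lam r)) (φ : Fin r → ℝ) (t : Lam r → ℂ) (y : Fin r → ℝ) : ℂ :=
  ∑ B ∈ basisFinsets Λ,
    (∏ g ∈ Λ \ B,
      t g / (t g - twoPiI * g.2 - ∑ f ∈ B, (t f - twoPiI * f.2) * (dot (vecR g) (dualVec B f) : ℂ)))
    * ((Nat.card (quotB B) : ℂ)⁻¹ *
      ∑ᶠ w : quotB B, ∏ f ∈ B,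
        t f * Complex.exp ((t f - twoPiI * f.2) *
            (mfract φ B f (fun i => y i + ((Quotient.out w : Fin r → ℤ) i : ℝ)) : ℂ))
          / (Complex.exp (t f - twoPiI * f.2) - 1))

def cube (r N : ℕ) : Finset (Fin r → ℤ) := Fintype.piFinset (fun _ => Finset.Icc (-(N:ℤ)) (N:ℤ))

def Zsum (Λ : Finset (Lam r)) (k : Lam r → ℕ) (y : Fin r → ℝ) (N : ℕ) : ℂ :=
  (-1 : ℂ) ^ (Λ.filter (fun f => k f = 0)).card *
  ∑ v ∈ cube r N,
    if (∀ f ∈ Λ, 0 < k f → fval f v ≠ 0) ∧ (∀ f ∈ Λ, k f = 0 → fval f v = 0) then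
      Complex.exp (twoPiI * (dot y (intCast' v) : ℂ)) *
        ∏ f ∈ Λ.filter (fun f => 0 < k f), ((fval f v) ^ (k f))⁻¹
    else 0

def Sdomain (Λ : Finset (Lam r)) (k : Lam r → ℕ) : Set (Fin r → ℝ) :=
  {y | y ∉ ⋃ f ∈ {f ∈ tildeSet Λ | k f = 1}, (hyp (Λ.erase f) + intLattice r)}

lemma fract_tendsto_right (a d : ℝ) (hd : 0 ≤ d) :
    Tendsto (fun c : ℝ => Int.fract (a + c * d)) (nhdsWithin 0 (Set.Ioi 0))
      (nhds (Int.fract a)) := by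
  rcases eq_or_lt_of_le hd with h0 | h0
  · simpa [← h0] using (tendsto_const_nhds :
      Tendsto (fun _ : ℝ => Int.fract a) (nhdsWithin 0 (Set.Ioi 0)) (nhds (Int.fract a)))
  · have hfa : Int.fract a < 1 := Int.fract_lt_one a
    have hδ : 0 < (1 - Int.fract a) / d := div_pos (by linarith) h0
    have hmem : Set.Ioo (0:ℝ) ((1 - Int.fract a)/d) ∈ nhdsWithin (0:ℝ) (Set.Ioi 0) :=
      Ioo_mem_nhdsGT_of_mem ⟨le_refl 0, hδ⟩
    have hev : ∀ᶠ c in nhdsWithin (0:ℝ) (Set.Ioi 0),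
        Int.fract a + c * d = Int.fract (a + c * d) := by
      filter_upwards [hmem] with c hc
      have h1 : 0 ≤ c * d := le_of_lt (mul_pos hc.1 h0)
      have h2 : c * d < 1 - Int.fract a := (lt_div_iff₀ h0).mp hc.2
      have hfloor : ⌊a + c * d⌋ = ⌊a⌋ := by
        rw [Int.floor_eq_iff]
        constructor
        · linarith [Int.floor_le a]
        · have := Int.self_sub_floor a
          push_cast
          nlinarith [Int.fract_nonneg a]
      rw [Int.fract, Int.fract, hfloor]
      ring
    have hlim : Tendsto (fun c : ℝ => Int.fract a + c * d) (nhdsWithin 0 (Set.Ioi 0))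
        (nhds (Int.fract a)) := by
      have : Tendsto (fun c : ℝ => Int.fract a + c * d) (nhds 0)
          (nhds (Int.fract a + 0 * d)) :=
        (continuous_const.add (continuous_id.mul continuous_const)).tendsto 0
      simpa using this.mono_left nhdsWithin_le_nhds
    exact hlim.congr' hev

lemma dot_add_smul (y φ u : Fin r → ℝ) (c : ℝ) :
    dot (fun i => y i + c * φ i) u = dot y u + c * dot φ u := by
  unfold dot
  rw [Finset.mul_sum, ← Finset.sum_add_distrib]
  exact Finset.sum_congr rfl fun i _ => by ring

lemma mfract_tendsto (φ : Fin r → ℝ) (B : Finset (Lam r)) (f : Lam r) (y : Fin r → ℝ) :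
    Tendsto (fun c : ℝ => mfract φ B f (fun i => y i + c * φ i))
      (nhdsWithin 0 (Set.Ioi 0)) (nhds (mfract φ B f y)) := by
  set u := dualVec B f with hu
  by_cases h : 0 < dot φ u
  · have hfun : ∀ c : ℝ, mfract φ B f (fun i => y i + c * φ i)
        = Int.fract (dot y u + c * dot φ u) := by
      intro c
      rw [mfract, if_pos h, ← hu, dot_add_smul]
    have hval : mfract φ B f y = Int.fract (dot y u) := by rw [mfract, if_pos h]
    rw [hval]
    exact (fract_tendsto_right (dot y u) (dot φ u) h.le).congr fun c => (hfun c).symm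
  · have hfun : ∀ c : ℝ, mfract φ B f (fun i => y i + c * φ i)
        = 1 - Int.fract (-dot y u + c * (-dot φ u)) := by
      intro c
      rw [mfract, if_neg h, ← hu, dot_add_smul]
      congr 2
      ring
    have hval : mfract φ B f y = 1 - Int.fract (-dot y u) := by rw [mfract, if_neg h]
    rw [hval]
    have hd : (0:ℝ) ≤ -dot φ u := by simpa using not_lt.mp h
    exact ((fract_tendsto_right (-dot y u) (-dot φ u) hd).const_sub 1).congr
      fun c => (hfun c).symm

lemma finite_quotB (B : Finset (Lam r)) (hB : isBasisSet r B) : Finite (quotB B) := by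
  classical
  have hcard : Fintype.card (↥B) = r := by rw [Fintype.card_coe]; exact hB.1
  set e : Fin r ≃ ↥B := (Fintype.equivFinOfCardEq hcard).symm with he
  set A : Matrix (Fin r) (Fin r) ℤ := Matrix.of (fun i j => ((e i : Lam r).1 j)) with hA
  have hli : LinearIndependent ℝ (fun i : Fin r => vecR ((e i : Lam r))) :=
    hB.2.comp e e.injective
  have hdetR : (A.map (Int.cast : ℤ → ℝ)).det ≠ 0 := by
    intro h0
    obtain ⟨v, hv, hvm⟩ := Matrix.exists_vecMul_eq_zero_iff.mpr h0
    apply hv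
    funext i
    refine Fintype.linearIndependent_iff.mp hli v ?_ i
    funext j
    have := congrFun hvm j
    simpa [Matrix.vecMul, dotProduct, hA, vecR, Finset.sum_apply] using this
  have hdet : A.det ≠ 0 := by
    intro h
    apply hdetR
    rw [show A.map (Int.cast : ℤ → ℝ) = (Int.castRingHom ℝ).mapMatrix A from rfl,
      ← RingHom.map_det, h]
    simp
  set n : ℕ := A.det.natAbs with hn
  have hn0 : n ≠ 0 := Int.natAbs_ne_zero.mpr hdet
  haveI : NeZero n := ⟨hn0⟩
  have hrow : ∀ i, ((e i : Lam r).1) ∈ Submodule.span ℤ (vecSet B) := fun i =>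
    Submodule.subset_span ⟨(e i : Lam r), Finset.mem_coe.mpr (e i).2, rfl⟩
  have hdetsmul : ∀ v : Fin r → ℤ, A.det • v ∈ Submodule.span ℤ (vecSet B) := by
    intro v
    have h1 : Matrix.vecMul (Matrix.vecMul v (Matrix.adjugate A)) A = A.det • v := by
      rw [Matrix.vecMul_vecMul, Matrix.adjugate_mul]
      funext j
      simp [Matrix.vecMul, dotProduct, Matrix.one_apply, mul_ite,
        Finset.sum_ite_eq', mul_comm]
    rw [← h1]
    have h2 : Matrix.vecMul (Matrix.vecMul v A.adjugate) A
        = ∑ i, (Matrix.vecMul v A.adjugate i) • ((e i : Lam r).1) := by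
      funext j
      simp [Matrix.vecMul, dotProduct, hA, Finset.sum_apply]
    rw [h2]
    exact Submodule.sum_mem _ fun i _ => Submodule.smul_mem _ _ (hrow i)
  set L : (Fin r → ℤ) →ₗ[ℤ] (Fin r → ZMod n) :=
    { toFun := fun v i => ((v i : ℤ) : ZMod n)
      map_add' := by intro x y; funext i; simp
      map_smul' := by intro c x; funext i; simp [zsmul_eq_mul] } with hL
  have hker : LinearMap.ker L ≤ Submodule.span ℤ (vecSet B) := by
    intro v hv
    have hv' : ∀ i, ((v i : ZMod n)) = 0 := fun i =>
      congrFun (LinearMap.mem_ker.mp hv) i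
    have hdvd : ∀ i, A.det ∣ v i := by
      intro i
      have h1 : (n : ℤ) ∣ v i := (ZMod.intCast_zmod_eq_zero_iff_dvd _ _).mp (hv' i)
      exact Int.natAbs_dvd.mp h1
    choose uu huu using hdvd
    have hveq : v = A.det • uu := funext fun i => by
      rw [Pi.smul_apply, smul_eq_mul, ← huu i]
    rw [hveq]
    exact hdetsmul uu
  haveI : Finite ((Fin r → ℤ) ⧸ LinearMap.ker L) :=
    Finite.of_equiv _ (LinearMap.quotKerEquivRange L).symm.toEquiv
  refine Finite.of_surjective
    (Submodule.mapQ (LinearMap.ker L) (Submodule.span ℤ (vecSet B)) LinearMap.id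
      (by simpa using hker)) ?_
  intro x
  obtain ⟨m, rfl⟩ := Submodule.Quotient.mk_surjective _ x
  exact ⟨Submodule.Quotient.mk m, by simp [Submodule.mapQ_apply]⟩

/-- one-sided continuity of the generating function `F(t,y;Λ)`
in `y`, in the direction `φ`, for every `t` in a sufficiently small
neighborhood of the origin of `ℂ^{♯Λ}`. -/
theorem statement1 (r : ℕ) (hr : 0 < r) (Λ : Finset (Lam r))
    (hne : ∀ f ∈ Λ, f.1 ≠ 0) (hrank : fullRank Λ)
    (φ : Fin r → ℝ) (hφ : goodPhi Λ φ) :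
    ∃ ε > (0 : ℝ), ∀ t : Lam r → ℂ, (∀ f ∈ Λ, ‖t f‖ < ε) →
      ∀ y : Fin r → ℝ,
        Filter.Tendsto (fun c : ℝ => Fgen Λ φ t (y + c • φ))
          (nhdsWithin 0 (Set.Ioi 0)) (nhds (Fgen Λ φ t y)) := by
  refine ⟨1, one_pos, fun t _ y => ?_⟩
  unfold Fgen
  apply tendsto_finset_sum
  intro B hB
  have hB' : isBasisSet r B := (Finset.mem_filter.mp hB).2
  apply Tendsto.const_mul
  apply Tendsto.const_mul
  haveI := finite_quotB B hB'
  haveI := Fintype.ofFinite (quotB B)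
  simp only [finsum_eq_sum_of_fintype]
  apply tendsto_finset_sum
  intro w _
  apply tendsto_finset_prod
  intro f _
  apply Tendsto.div_const
  apply Tendsto.const_mul
  have hm := mfract_tendsto φ B f (fun i => y i + ((Quotient.out w : Fin r → ℤ) i : ℝ))
  have hm' : Tendsto
      (fun c : ℝ => mfract φ B f (fun i => (y + c • φ) i + ((Quotient.out w : Fin r → ℤ) i : ℝ)))
      (nhdsWithin 0 (Set.Ioi 0))
      (nhds (mfract φ B f (fun i => y i + ((Quotient.out w : Fin r → ℤ) i : ℝ)))) := by
    refine hm.congr fun c => ?_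
    congr 1
    funext i
    simp only [Pi.add_apply, Pi.smul_apply, smul_eq_mul]
    ring
  exact (Complex.continuous_exp.tendsto _).comp
    (((Complex.continuous_ofReal.tendsto _).comp hm').const_mul _)

end Stmt
end
end

section
/- For every μ > 0 there exists a constant K > 0 such that for all a, z > 0, ∫₀^∞ e^{−xz}/√(x² + a²) dx ≤ K (az)^{−1/(μ+1)}. -/
open scoped Real
open Filter MeasureTheory

/-- for every `μ > 0` there exists `K > 0` such that for all
`a, z > 0`, `∫₀^∞ e^{−xz}/√(x²+a²) dx ≤ K (az)^{−1/(μ+1)}`. -/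
theorem statement7 (μ : ℝ) (hμ : 0 < μ) :
    ∃ K > (0 : ℝ), ∀ a z : ℝ, 0 < a → 0 < z →
      (∫ x in Set.Ioi (0 : ℝ), Real.exp (-x * z) / Real.sqrt (x ^ 2 + a ^ 2)) ≤
        K * (a * z) ^ (-(1 / (μ + 1))) := by
  set α : ℝ := 1 / (μ + 1) with hα
  have hα0 : 0 < α := by positivity
  have hα1 : α < 1 := by
    rw [hα, div_lt_one (by linarith)]; linarith
  refine ⟨Real.Gamma α, Real.Gamma_pos_of_pos hα0, fun a z ha hz => ?_⟩
  -- the dominating function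
  have hint : MeasureTheory.IntegrableOn
      (fun x : ℝ => x ^ (α - 1) * Real.exp (-(z * x))) (Set.Ioi 0) := by
    have := integrableOn_rpow_mul_exp_neg_mul_rpow (p := 1) (s := α - 1) (b := z)
      (by linarith) one_pos hz
    refine this.congr_fun (fun x hx => ?_) measurableSet_Ioi
    beta_reduce; rw [Real.rpow_one, neg_mul]
  -- pointwise bound
  have hpt : ∀ x ∈ Set.Ioi (0 : ℝ),
      Real.exp (-x * z) / Real.sqrt (x ^ 2 + a ^ 2) ≤
        a ^ (-α) * (x ^ (α - 1) * Real.exp (-(z * x))) := by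
    intro x hx
    have hx0 : 0 < x := hx
    set m : ℝ := max x a with hm
    have hm0 : 0 < m := lt_max_of_lt_left hx0
    have key : x ^ (1 - α) * a ^ α ≤ Real.sqrt (x ^ 2 + a ^ 2) := by
      have h1 : x ^ (1 - α) ≤ m ^ (1 - α) :=
        Real.rpow_le_rpow hx0.le (le_max_left _ _) (by linarith)
      have h2 : a ^ α ≤ m ^ α :=
        Real.rpow_le_rpow ha.le (le_max_right _ _) hα0.le
      have h3 : x ^ (1 - α) * a ^ α ≤ m := by
        calc x ^ (1 - α) * a ^ α ≤ m ^ (1 - α) * m ^ α := by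
              exact mul_le_mul h1 h2 (Real.rpow_nonneg ha.le _)
                (Real.rpow_nonneg hm0.le _)
          _ = m := by rw [← Real.rpow_add hm0]; simp
      refine h3.trans (Real.le_sqrt_of_sq_le ?_)
      rcases max_cases x a with ⟨h, _⟩ | ⟨h, _⟩ <;> rw [hm, h] <;> nlinarith
    have hden : 0 < x ^ (1 - α) * a ^ α := by positivity
    have : Real.exp (-x * z) / Real.sqrt (x ^ 2 + a ^ 2) ≤
        Real.exp (-x * z) / (x ^ (1 - α) * a ^ α) := by
      gcongr
    refine this.trans (le_of_eq ?_)
    rw [div_eq_mul_inv, mul_inv, ← Real.rpow_neg hx0.le, ← Real.rpow_neg ha.le,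
      neg_sub]
    ring_nf
  have hmono : (∫ x in Set.Ioi (0 : ℝ),
      Real.exp (-x * z) / Real.sqrt (x ^ 2 + a ^ 2)) ≤
      ∫ x in Set.Ioi (0 : ℝ), a ^ (-α) * (x ^ (α - 1) * Real.exp (-(z * x))) := by
    refine MeasureTheory.integral_mono_of_nonneg ?_ (hint.const_mul _) ?_
    · filter_upwards with x
      positivity
    · filter_upwards [MeasureTheory.ae_restrict_mem measurableSet_Ioi] with x hx
      exact hpt x hx
  refine hmono.trans (le_of_eq ?_)
  rw [MeasureTheory.integral_const_mul, Real.integral_rpow_mul_exp_neg_mul_Ioi hα0 hz,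
    Real.mul_rpow ha.le hz.le, one_div, Real.inv_rpow hz.le, ← Real.rpow_neg hz.le]
  ring
end

section
/- Let n ∈ ℕ and P, Q ∈ ℕ₀ with P ≥ Q. Let a_{ki} ∈ ℝ for 1 ≤ k ≤ P and 0 ≤ i ≤ n, such that for each k = 1, …, P there exists some i ≥ 1 with a_{ki} ≠ 0. If μ ≥ P, then the function (x₁,…,x_n) ↦ (∏_{k=1}^{Q} (1 − {a_{k0} + Σ_{i=1}^n a_{ki} x_i})^{−1/(μ+1)}) · (∏_{k=Q+1}^{P} {a_{k0} + Σ_{i=1}^n a_{ki} x_i}^{−1/(μ+1)}) is integrable over [0,1]^n, i.e., its integral over [0,1]^n is finite. -/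
open scoped Real ENNReal
open MeasureTheory Set

noncomputable section

-- unit-interval interval-integrability of fract^(-s)
lemma fractPow_intInt {s : ℝ} (hs1 : s < 1) (j : ℤ) :
    IntervalIntegrable (fun x => Int.fract x ^ (-s)) volume (j : ℝ) ((j : ℝ) + 1) := by
  rw [intervalIntegrable_iff_integrableOn_Ioc_of_le (by linarith)]
  have base : IntervalIntegrable (fun x : ℝ => (x - (j : ℝ)) ^ (-s)) volume
      ((0 : ℝ) + j) ((1 : ℝ) + j) :=
    (intervalIntegral.intervalIntegrable_rpow' (by linarith)).comp_sub_right (j : ℝ)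
  have base' : IntegrableOn (fun x : ℝ => (x - (j : ℝ)) ^ (-s)) (Ioc (j : ℝ) ((j : ℝ) + 1)) := by
    have := (intervalIntegrable_iff_integrableOn_Ioc_of_le (by linarith)).1 base
    simpa [zero_add, add_comm] using this
  refine base'.congr_fun_ae ?_
  have hnull : (volume : Measure ℝ) {((j : ℝ) + 1)} = 0 := Real.volume_singleton
  have h1 : ∀ᵐ x ∂(volume.restrict (Ioc (j : ℝ) ((j : ℝ) + 1))), x ≠ (j : ℝ) + 1 := by
    refine ae_restrict_of_ae ?_
    rw [ae_iff]
    simpa using hnull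
  have h2 : ∀ᵐ x ∂(volume.restrict (Ioc (j : ℝ) ((j : ℝ) + 1))), x ∈ Ioc (j : ℝ) ((j : ℝ) + 1) :=
    ae_restrict_mem measurableSet_Ioc
  filter_upwards [h1, h2] with x hx hmem
  have hx1 : x - (j : ℝ) ∈ Ico (0 : ℝ) 1 := by
    constructor <;> [linarith [hmem.1]; cases lt_or_eq_of_le hmem.2 with
      | inl h => linarith
      | inr h => exact absurd h hx]
  have : Int.fract x = x - (j : ℝ) := by
    have := Int.fract_add_intCast (x - (j : ℝ)) j
    rw [sub_add_cancel] at this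
    rw [this, Int.fract_eq_self.2 ⟨hx1.1, hx1.2⟩]
  rw [this]

lemma onefractPow_intInt {s : ℝ} (hs1 : s < 1) (j : ℤ) :
    IntervalIntegrable (fun x => (1 - Int.fract x) ^ (-s)) volume (j : ℝ) ((j : ℝ) + 1) := by
  rw [intervalIntegrable_iff_integrableOn_Ioc_of_le (by linarith)]
  have base : IntervalIntegrable (fun x : ℝ => (((j : ℝ) + 1) - x) ^ (-s)) volume
      (((j : ℝ) + 1) - 1) (((j : ℝ) + 1) - 0) :=
    (intervalIntegral.intervalIntegrable_rpow' (by linarith)).comp_sub_left ((j : ℝ) + 1)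
  have base' : IntegrableOn (fun x : ℝ => (((j : ℝ) + 1) - x) ^ (-s)) (Ioc (j : ℝ) ((j : ℝ) + 1)) := by
    have := (intervalIntegrable_iff_integrableOn_Ioc_of_le (by linarith : ((j:ℝ)+1) - 1 ≤ ((j:ℝ)+1) - 0)).1 base
    simpa using this
  refine base'.congr_fun_ae ?_
  have h1 : ∀ᵐ x ∂(volume.restrict (Ioc (j : ℝ) ((j : ℝ) + 1))), x ≠ (j : ℝ) + 1 := by
    refine ae_restrict_of_ae ?_
    rw [ae_iff]
    simpa using (Real.volume_singleton (x := (j : ℝ) + 1))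
  have h2 : ∀ᵐ x ∂(volume.restrict (Ioc (j : ℝ) ((j : ℝ) + 1))), x ∈ Ioc (j : ℝ) ((j : ℝ) + 1) :=
    ae_restrict_mem measurableSet_Ioc
  filter_upwards [h1, h2] with x hx hmem
  have hx1 : x - (j : ℝ) ∈ Ico (0 : ℝ) 1 := by
    constructor
    · linarith [hmem.1]
    · cases lt_or_eq_of_le hmem.2 with
      | inl h => linarith
      | inr h => exact absurd h hx
  have hfr : Int.fract x = x - (j : ℝ) := by
    have := Int.fract_add_intCast (x - (j : ℝ)) j
    rw [sub_add_cancel] at this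
    rw [this, Int.fract_eq_self.2 ⟨hx1.1, hx1.2⟩]
  rw [hfr]
  ring_nf

lemma chain_intInt {f : ℝ → ℝ}
    (h : ∀ j : ℤ, IntervalIntegrable f volume (j : ℝ) ((j : ℝ) + 1)) (M : ℕ) :
    IntegrableOn f (Ioc (-(M : ℝ)) (M : ℝ)) volume := by
  have key : ∀ k : ℕ, IntervalIntegrable f volume ((-(M : ℤ) : ℤ) : ℝ) (((-(M : ℤ) + k : ℤ)) : ℝ) := by
    intro k
    induction k with
    | zero => simpa using IntervalIntegrable.refl (f := f) (μ := volume) (a := ((-(M:ℤ) : ℤ) : ℝ))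
    | succ k ih =>
        have hj := h (-(M : ℤ) + k)
        have heq : ((-(M : ℤ) + ((k+1 : ℕ) : ℤ) : ℤ) : ℝ) = ((-(M:ℤ) + (k : ℤ) : ℤ) : ℝ) + 1 := by push_cast; ring
        rw [heq]
        exact ih.trans hj
  have := key (2 * M)
  have e1 : ((-(M : ℤ) : ℤ) : ℝ) = -(M : ℝ) := by push_cast; ring
  have e2 : ((-(M : ℤ) + (2 * M : ℕ) : ℤ) : ℝ) = (M : ℝ) := by push_cast; ring
  rw [e1, e2] at this
  exact (intervalIntegrable_iff_integrableOn_Ioc_of_le (by simp [neg_le_self_iff])).1 this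

lemma null_int_fract_zero : (volume : Measure ℝ) {x : ℝ | Int.fract x = 0} = 0 := by
  have hsub : {x : ℝ | Int.fract x = 0} ⊆ Set.range (fun m : ℤ => (m : ℝ)) := by
    intro x hx
    exact ⟨⌊x⌋, by have := hx; simp only [mem_setOf_eq, Int.fract] at this; linarith⟩
  exact measure_mono_null hsub ((Set.countable_range _).measure_zero _)

lemma g1_fin {s : ℝ} (hs1 : s < 1) (M : ℕ) :
    ∫⁻ u in Ioc (-(M : ℝ)) (M : ℝ), (ENNReal.ofReal (Int.fract u)) ^ (-s) ≠ ⊤ := by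
  have hInt : IntegrableOn (fun x => Int.fract x ^ (-s)) (Ioc (-(M : ℝ)) (M : ℝ)) volume :=
    chain_intInt (fractPow_intInt hs1) M
  have hae : (fun u => (ENNReal.ofReal (Int.fract u)) ^ (-s)) =ᵐ[volume.restrict (Ioc (-(M : ℝ)) (M : ℝ))]
      fun u => ENNReal.ofReal (Int.fract u ^ (-s)) := by
    refine ae_restrict_of_ae ?_
    have : ∀ᵐ x ∂(volume : Measure ℝ), Int.fract x ≠ 0 := by
      rw [ae_iff]; simpa using null_int_fract_zero
    filter_upwards [this] with x hx
    have hpos : 0 < Int.fract x := lt_of_le_of_ne (Int.fract_nonneg x) (Ne.symm hx)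
    exact ENNReal.ofReal_rpow_of_pos hpos
  rw [lintegral_congr_ae hae]
  exact hInt.lintegral_lt_top.ne

lemma g2_fin {s : ℝ} (hs1 : s < 1) (M : ℕ) :
    ∫⁻ u in Ioc (-(M : ℝ)) (M : ℝ), (ENNReal.ofReal (1 - Int.fract u)) ^ (-s) ≠ ⊤ := by
  have hInt : IntegrableOn (fun x => (1 - Int.fract x) ^ (-s)) (Ioc (-(M : ℝ)) (M : ℝ)) volume :=
    chain_intInt (onefractPow_intInt hs1) M
  have hae : (fun u => (ENNReal.ofReal (1 - Int.fract u)) ^ (-s)) =ᵐ[volume.restrict (Ioc (-(M : ℝ)) (M : ℝ))]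
      fun u => ENNReal.ofReal ((1 - Int.fract u) ^ (-s)) := by
    refine Filter.Eventually.of_forall (fun x => ?_)
    have hpos : 0 < 1 - Int.fract x := by linarith [Int.fract_lt_one x]
    exact ENNReal.ofReal_rpow_of_pos hpos
  rw [lintegral_congr_ae hae]
  exact hInt.lintegral_lt_top.ne

lemma oneD_bound (G : ℝ → ℝ≥0∞) (hGm : Measurable G)
    (hGper : ∀ (y : ℝ) (m : ℤ), G (y + m) = G y) {a : ℝ} (ha : a ≠ 0) (c : ℝ) :
    ∫⁻ t in Icc (0 : ℝ) 1, G (c + a * t) ≤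
      ENNReal.ofReal |a⁻¹| * ∫⁻ u in Ioc (-((⌊|a|⌋₊ + 2 : ℕ) : ℝ)) ((⌊|a|⌋₊ + 2 : ℕ) : ℝ), G u := by
  set M : ℝ := ((⌊|a|⌋₊ + 2 : ℕ) : ℝ) with hMdef
  have hM : |a| + 1 < M := by
    have := Nat.lt_floor_add_one |a|
    have h2 : ((⌊|a|⌋₊ + 2 : ℕ) : ℝ) = (⌊|a|⌋₊ : ℝ) + 2 := by push_cast; ring
    rw [hMdef, h2]; linarith
  have hc : ∀ t : ℝ, G (c + a * t) = G (Int.fract c + a * t) := by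
    intro t
    have he : c + a * t = (Int.fract c + a * t) + (⌊c⌋ : ℤ) := by
      rw [Int.fract]; push_cast; ring
    rw [he, hGper]
  simp_rw [hc]
  set c' := Int.fract c with hc'
  set H : ℝ → ℝ≥0∞ := (Ioc (-M) M).indicator G with hH
  have hHm : Measurable H := hGm.indicator measurableSet_Ioc
  have hmap : Measure.map (fun t : ℝ => c' + a * t) volume = ENNReal.ofReal |a⁻¹| • volume := by
    have hcomp : (fun t : ℝ => c' + a * t) = (fun u : ℝ => c' + u) ∘ (fun t : ℝ => a * t) := rfl
    rw [hcomp, ← Measure.map_map (measurable_const_add c') (measurable_const_mul a),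
      Real.map_volume_mul_left ha, Measure.map_smul, map_add_left_eq_self]
  have hpt : ∀ t : ℝ, (Icc (0 : ℝ) 1).indicator (fun t => G (c' + a * t)) t ≤ H (c' + a * t) := by
    intro t
    by_cases ht : t ∈ Icc (0 : ℝ) 1
    · rw [indicator_of_mem ht]
      have h0 : 0 ≤ c' := Int.fract_nonneg c
      have h1 : c' < 1 := Int.fract_lt_one c
      have hat : |a * t| ≤ |a| := by
        rw [abs_mul]
        have : |t| ≤ 1 := by rw [abs_le]; exact ⟨by linarith [ht.1], ht.2⟩
        nlinarith [abs_nonneg a]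
      have hmem : c' + a * t ∈ Ioc (-M) M := by
        constructor
        · have := neg_abs_le (a * t); linarith
        · have := le_abs_self (a * t); linarith
      rw [hH, indicator_of_mem hmem]
    · rw [indicator_of_notMem ht]; exact zero_le
  calc ∫⁻ t in Icc (0 : ℝ) 1, G (c' + a * t)
      = ∫⁻ t, (Icc (0 : ℝ) 1).indicator (fun t => G (c' + a * t)) t := by
        rw [lintegral_indicator measurableSet_Icc]
    _ ≤ ∫⁻ t, H (c' + a * t) := lintegral_mono hpt
    _ = ∫⁻ u, H u ∂(Measure.map (fun t : ℝ => c' + a * t) volume) := by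
        rw [lintegral_map hHm (by fun_prop)]
    _ = ENNReal.ofReal |a⁻¹| * ∫⁻ u, H u := by rw [hmap, lintegral_smul_measure, smul_eq_mul]
    _ = ENNReal.ofReal |a⁻¹| * ∫⁻ u in Ioc (-M) M, G u := by
        rw [hH, lintegral_indicator measurableSet_Ioc]

lemma pi_restrict_cube (n : ℕ) :
    (volume : Measure (Fin n → ℝ)).restrict (Set.pi Set.univ fun _ : Fin n => Icc (0 : ℝ) 1)
      = Measure.pi (fun _ : Fin n => (volume : Measure ℝ).restrict (Icc (0 : ℝ) 1)) := by
  refine (Measure.pi_eq (μ := fun _ : Fin n => (volume : Measure ℝ).restrict (Icc (0 : ℝ) 1)) (μ' := (volume : Measure (Fin n → ℝ)).restrict (Set.pi Set.univ fun _ : Fin n => Icc (0 : ℝ) 1)) fun s hs => ?_).symm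
  rw [Measure.restrict_apply (MeasurableSet.univ_pi hs)]
  have : (Set.pi Set.univ s) ∩ (Set.pi Set.univ fun _ : Fin n => Icc (0 : ℝ) 1)
      = Set.pi Set.univ (fun i => s i ∩ Icc (0 : ℝ) 1) := by
    rw [← Set.pi_inter_distrib]
  rw [this, volume_pi, Measure.pi_pi]
  exact Finset.prod_congr rfl fun i _ =>
    (Measure.restrict_apply (hs i)).symm

lemma cube_bound (n : ℕ) (G : ℝ → ℝ≥0∞) (hGm : Measurable G) (c0 : ℝ)
    (aa : Fin (n + 1) → ℝ) (i0 : Fin (n + 1)) (C : ℝ≥0∞)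
    (hbd : ∀ c : ℝ, ∫⁻ t in Icc (0 : ℝ) 1, G (c + aa i0 * t) ≤ C) :
    ∫⁻ x in Set.pi Set.univ (fun _ : Fin (n + 1) => Icc (0 : ℝ) 1),
      G (c0 + ∑ i, aa i * x i) ≤ C := by
  haveI : IsFiniteMeasure ((volume : Measure ℝ).restrict (Icc (0 : ℝ) 1)) :=
    ⟨by simp [Real.volume_Icc]⟩
  rw [pi_restrict_cube (n + 1)]
  set μ1 : Measure ℝ := (volume : Measure ℝ).restrict (Icc (0 : ℝ) 1) with hμ1
  set ν : Measure (Fin n → ℝ) := Measure.pi (fun _ : Fin n => μ1) with hν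
  have hmp := measurePreserving_piFinSuccAbove (fun _ : Fin (n + 1) => μ1) i0
  set e := MeasurableEquiv.piFinSuccAbove (fun _ : Fin (n + 1) => ℝ) i0 with he
  set g : ℝ × (Fin n → ℝ) → ℝ≥0∞ := fun p => G (c0 + ∑ i, aa i * (e.symm p) i) with hg
  have hgm : Measurable g := by
    apply hGm.comp
    apply Measurable.const_add
    exact Finset.measurable_sum _ fun i _ =>
      (measurable_pi_apply i).comp e.symm.measurable |>.const_mul _
  have hfg : ∀ x : Fin (n + 1) → ℝ, G (c0 + ∑ i, aa i * x i) = g (e x) := by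
    intro x
    rw [hg]
    simp only [MeasurableEquiv.symm_apply_apply]
  calc ∫⁻ x, G (c0 + ∑ i, aa i * x i) ∂(Measure.pi fun _ : Fin (n+1) => μ1)
      = ∫⁻ x, g (e x) ∂(Measure.pi fun _ : Fin (n+1) => μ1) := lintegral_congr hfg
    _ = ∫⁻ p, g p ∂(μ1.prod ν) := hmp.lintegral_comp hgm
    _ = ∫⁻ y, ∫⁻ t, g (t, y) ∂μ1 ∂ν := lintegral_prod_symm g hgm.aemeasurable
    _ ≤ ∫⁻ _, C ∂ν := by
        refine lintegral_mono fun y => ?_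
        have hinner : ∀ t : ℝ, g (t, y) =
            G ((c0 + ∑ j, aa (i0.succAbove j) * y j) + aa i0 * t) := by
          intro t
          have hsymm : (e.symm (t, y) : Fin (n + 1) → ℝ) = i0.insertNth (α := fun _ => ℝ) t y := rfl
          simp only [hg, hsymm]
          congr 1
          rw [Fin.sum_univ_succAbove (fun i => aa i * (i0.insertNth (α := fun _ => ℝ) t y) i) i0]
          simp only [Fin.insertNth_apply_same, Fin.insertNth_apply_succAbove]
          ring
        calc ∫⁻ t, g (t, y) ∂μ1
            = ∫⁻ t, G ((c0 + ∑ j, aa (i0.succAbove j) * y j) + aa i0 * t) ∂μ1 :=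
              lintegral_congr hinner
          _ ≤ C := hbd _
    _ = C * ν Set.univ := lintegral_const C
    _ ≤ C * 1 := by
        refine mul_le_mul_right ?_ C
        rw [hν, Measure.pi_univ]
        simp [hμ1, Real.volume_Icc]
    _ = C := mul_one C

lemma prod_le_sum_pow {ι : Type*} (t : Finset ι) (w : ι → ℝ≥0∞) (ht : t.Nonempty) :
    ∏ k ∈ t, w k ≤ ∑ k ∈ t, w k ^ t.card := by
  obtain ⟨k0, hk0, hsup⟩ := Finset.exists_mem_eq_sup t ht w
  calc ∏ k ∈ t, w k ≤ (t.sup w) ^ t.card :=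
        Finset.prod_le_pow_card t w _ fun i hi => Finset.le_sup hi
    _ = w k0 ^ t.card := by rw [hsup]
    _ ≤ ∑ k ∈ t, w k ^ t.card := Finset.single_le_sum (f := fun k => w k ^ t.card) (fun i _ => zero_le) hk0

lemma cube_fin (n : ℕ) (G : ℝ → ℝ≥0∞) (hGm : Measurable G)
    (hGper : ∀ (y : ℝ) (m : ℤ), G (y + m) = G y)
    (hfin : ∀ M : ℕ, ∫⁻ u in Ioc (-(M : ℝ)) (M : ℝ), G u ≠ ⊤)
    (c0 : ℝ) (aa : Fin (n + 1) → ℝ) (i0 : Fin (n + 1)) (h : aa i0 ≠ 0) :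
    ∫⁻ x in Set.pi Set.univ (fun _ : Fin (n + 1) => Icc (0 : ℝ) 1),
      G (c0 + ∑ i, aa i * x i) < ⊤ := by
  set M : ℕ := ⌊|aa i0|⌋₊ + 2 with hM
  set C : ℝ≥0∞ := ENNReal.ofReal |(aa i0)⁻¹| * ∫⁻ u in Ioc (-(M : ℝ)) (M : ℝ), G u with hC
  refine lt_of_le_of_lt
    (cube_bound n G hGm c0 aa i0 C (fun c => oneD_bound G hGm hGper h c)) ?_
  rw [hC]
  exact ENNReal.mul_lt_top ENNReal.ofReal_lt_top (hfin M).lt_top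

/-- integrability over `[0,1]^n` of
`(∏_{k=1}^{Q}(1−{a_{k0}+Σᵢa_{ki}xᵢ})^{−1/(μ+1)})·(∏_{k=Q+1}^{P}{a_{k0}+Σᵢa_{ki}xᵢ}^{−1/(μ+1)})`
when `μ ≥ P` (the integrand is interpreted in `[0,∞]`, with `0^{−1/(μ+1)} = ∞`). -/
theorem statement12 (n : ℕ) (hn : 0 < n) (P Q : ℕ) (hPQ : Q ≤ P)
    (a0 : Fin P → ℝ) (a : Fin P → Fin n → ℝ)
    (ha : ∀ k : Fin P, ∃ i : Fin n, a k i ≠ 0)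
    (μ : ℝ) (hμ : (P : ℝ) ≤ μ) :
    (∫⁻ x in Set.pi Set.univ (fun _ : Fin n => Set.Icc (0 : ℝ) 1),
      (∏ k ∈ Finset.univ.filter (fun k : Fin P => (k : ℕ) < Q),
        (ENNReal.ofReal (1 - Int.fract (a0 k + ∑ i, a k i * x i))) ^ (-(1 / (μ + 1)))) *
      ∏ k ∈ Finset.univ.filter (fun k : Fin P => ¬ (k : ℕ) < Q),
        (ENNReal.ofReal (Int.fract (a0 k + ∑ i, a k i * x i))) ^ (-(1 / (μ + 1)))) < ⊤ := by
  obtain ⟨m, rfl⟩ : ∃ m, n = m + 1 := ⟨n - 1, (Nat.succ_pred_eq_of_pos hn).symm⟩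
  rcases Nat.eq_zero_or_pos P with rfl | hP
  · -- P = 0 : integrand is 1
    simp only [Finset.univ_eq_empty, Finset.filter_empty, Finset.prod_empty, one_mul]
    rw [setLIntegral_one]
    rw [volume_pi_pi]
    simp [Real.volume_Icc]
  · -- P ≥ 1
    have hμ1 : (0 : ℝ) < μ + 1 := by
      have : (0 : ℝ) ≤ (P : ℝ) := Nat.cast_nonneg P
      linarith
    set s : ℝ := (P : ℝ) / (μ + 1) with hs
    have hs1 : s < 1 := by
      rw [hs, div_lt_one hμ1]
      linarith
    -- exponent algebra
    have hpow : ∀ z : ℝ≥0∞, (z ^ (-(1 / (μ + 1)))) ^ P = z ^ (-s) := by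
      intro z
      rw [← ENNReal.rpow_natCast (z ^ (-(1 / (μ + 1)))) P, ← ENNReal.rpow_mul]
      congr 1
      rw [hs]
      field_simp
    -- the two basic functions
    set G1 : ℝ → ℝ≥0∞ := fun y => (ENNReal.ofReal (Int.fract y)) ^ (-s) with hG1
    set G2 : ℝ → ℝ≥0∞ := fun y => (ENNReal.ofReal (1 - Int.fract y)) ^ (-s) with hG2
    set Gs : Fin P → ℝ → ℝ≥0∞ := fun k => if (k : ℕ) < Q then G2 else G1 with hGs
    set r : ℝ := -(1 / (μ + 1)) with hr
    set W : Fin P → (Fin (m + 1) → ℝ) → ℝ≥0∞ := fun k x =>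
      if (k : ℕ) < Q then (ENNReal.ofReal (1 - Int.fract (a0 k + ∑ i, a k i * x i))) ^ r
      else (ENNReal.ofReal (Int.fract (a0 k + ∑ i, a k i * x i))) ^ r with hW
    have hmfract : Measurable (Int.fract : ℝ → ℝ) := measurable_fract
    have hℓm : ∀ k : Fin P, Measurable fun x : Fin (m + 1) → ℝ => a0 k + ∑ i, a k i * x i := by
      intro k
      exact (Finset.measurable_sum _ fun i _ =>
        (by fun_prop : Measurable fun x : Fin (m + 1) → ℝ => a k i * x i)).const_add (a0 k)
    have hG1m : Measurable G1 :=
      ENNReal.continuous_rpow_const.measurable.comp (ENNReal.measurable_ofReal.comp hmfract)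
    have hG2m : Measurable G2 :=
      ENNReal.continuous_rpow_const.measurable.comp
        (ENNReal.measurable_ofReal.comp (hmfract.const_sub 1))
    have hGsm : ∀ k, Measurable (Gs k) := by
      intro k
      by_cases hk : (k : ℕ) < Q
      · simp only [hGs, if_pos hk]; exact hG2m
      · simp only [hGs, if_neg hk]; exact hG1m
    -- pointwise bound
    have hne : (Finset.univ : Finset (Fin P)).Nonempty := by
      haveI := Fin.pos_iff_nonempty.1 hP
      exact Finset.univ_nonempty
    have hbound : ∀ x : Fin (m + 1) → ℝ,
        (∏ k ∈ Finset.univ.filter (fun k : Fin P => (k : ℕ) < Q),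
          (ENNReal.ofReal (1 - Int.fract (a0 k + ∑ i, a k i * x i))) ^ (-(1 / (μ + 1)))) *
        (∏ k ∈ Finset.univ.filter (fun k : Fin P => ¬ (k : ℕ) < Q),
          (ENNReal.ofReal (Int.fract (a0 k + ∑ i, a k i * x i))) ^ (-(1 / (μ + 1))))
        ≤ ∑ k : Fin P, Gs k (a0 k + ∑ i, a k i * x i) := by
      intro x
      have h1 : ∏ k ∈ Finset.univ.filter (fun k : Fin P => (k : ℕ) < Q),
          (ENNReal.ofReal (1 - Int.fract (a0 k + ∑ i, a k i * x i))) ^ (-(1 / (μ + 1)))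
          = ∏ k ∈ Finset.univ.filter (fun k : Fin P => (k : ℕ) < Q), W k x := by
        refine Finset.prod_congr rfl fun k hk => ?_
        rw [hW]
        simp only [if_pos (Finset.mem_filter.1 hk).2]
        rfl
      have h2 : ∏ k ∈ Finset.univ.filter (fun k : Fin P => ¬ (k : ℕ) < Q),
          (ENNReal.ofReal (Int.fract (a0 k + ∑ i, a k i * x i))) ^ (-(1 / (μ + 1)))
          = ∏ k ∈ Finset.univ.filter (fun k : Fin P => ¬ (k : ℕ) < Q), W k x := by
        refine Finset.prod_congr rfl fun k hk => ?_
        rw [hW]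
        simp only [if_neg (Finset.mem_filter.1 hk).2]
        rfl
      rw [h1, h2, Finset.prod_filter_mul_prod_filter_not]
      have h3 := prod_le_sum_pow Finset.univ (fun k => W k x) hne
      rw [Finset.card_univ, Fintype.card_fin] at h3
      refine h3.trans (le_of_eq (Finset.sum_congr rfl fun k _ => ?_))
      rw [hW, hGs]
      by_cases hk : (k : ℕ) < Q
      · simp only [if_pos hk]
        exact hpow _
      · simp only [if_neg hk]
        exact hpow _
    -- assemble
    have hGsmeas : ∀ k ∈ (Finset.univ : Finset (Fin P)),
        Measurable fun x : Fin (m + 1) → ℝ => Gs k (a0 k + ∑ i, a k i * x i) :=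
      fun k _ => (hGsm k).comp (hℓm k)
    calc (∫⁻ x in Set.pi Set.univ (fun _ : Fin (m + 1) => Set.Icc (0 : ℝ) 1),
          (∏ k ∈ Finset.univ.filter (fun k : Fin P => (k : ℕ) < Q),
            (ENNReal.ofReal (1 - Int.fract (a0 k + ∑ i, a k i * x i))) ^ (-(1 / (μ + 1)))) *
          ∏ k ∈ Finset.univ.filter (fun k : Fin P => ¬ (k : ℕ) < Q),
            (ENNReal.ofReal (Int.fract (a0 k + ∑ i, a k i * x i))) ^ (-(1 / (μ + 1))))
        ≤ ∫⁻ x in Set.pi Set.univ (fun _ : Fin (m + 1) => Set.Icc (0 : ℝ) 1),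
            ∑ k : Fin P, Gs k (a0 k + ∑ i, a k i * x i) :=
          lintegral_mono fun x => hbound x
      _ = ∑ k : Fin P, ∫⁻ x in Set.pi Set.univ (fun _ : Fin (m + 1) => Set.Icc (0 : ℝ) 1),
            Gs k (a0 k + ∑ i, a k i * x i) :=
          lintegral_finset_sum Finset.univ hGsmeas
      _ < ⊤ := by
          rw [ENNReal.sum_lt_top]
          intro k _
          obtain ⟨i0, hi0⟩ := ha k
          refine cube_fin m (Gs k) (hGsm k) ?_ ?_ (a0 k) (a k) i0 hi0
          · intro y mm
            rw [hGs]
            by_cases hk : (k : ℕ) < Q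
            · simp only [if_pos hk, hG2, Int.fract_add_intCast]
            · simp only [if_neg hk, hG1, Int.fract_add_intCast]
          · intro M
            by_cases hk : (k : ℕ) < Q
            · simp only [hGs, if_pos hk, hG2]
              exact g2_fin hs1 M
            · simp only [hGs, if_neg hk, hG1]
              exact g1_fin hs1 M
end
end

section
/- The sum Σ_{m ∈ ℤ, m ∉ {−1, 0, 1}} 1/((1−m)² m² (1+m)²) converges absolutely and equals π²/2 − 39/8. -/
open scoped Real

namespace Statement19Aux

/-- `h n` is the telescoping helper, corresponding to `m = n + 2`. -/
noncomputable def h (n : ℕ) : ℝ :=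
  (1 / 4) * (1 / ((n : ℝ) + 1) ^ 2 - 1 / ((n : ℝ) + 2) ^ 2)
    - (3 / 4) * (1 / ((n : ℝ) + 1) + 1 / ((n : ℝ) + 2))

/-- `F n = f (n + 2)` where `f m = 1/((1-m)² m² (1+m)²)`. -/
noncomputable def F (n : ℕ) : ℝ :=
  1 / (((n : ℝ) + 1) ^ 2 * ((n : ℝ) + 2) ^ 2 * ((n : ℝ) + 3) ^ 2)

lemma tendsto_aux (c : ℝ) (hc : 0 < c) :
    Filter.Tendsto (fun n : ℕ => 1 / ((n : ℝ) + c)) Filter.atTop (nhds 0) := by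
  simpa [one_div, Pi.inv_def] using
    (Filter.tendsto_atTop_add_const_right _ c
      tendsto_natCast_atTop_atTop).inv_tendsto_atTop

lemma h_tendsto : Filter.Tendsto h Filter.atTop (nhds 0) := by
  have h1 := tendsto_aux 1 one_pos
  have h2 := tendsto_aux 2 two_pos
  have h1s : Filter.Tendsto (fun n : ℕ => 1 / ((n : ℝ) + 1) ^ 2) Filter.atTop (nhds 0) := by
    simpa [div_mul_div_comm, sq] using h1.mul h1
  have h2s : Filter.Tendsto (fun n : ℕ => 1 / ((n : ℝ) + 2) ^ 2) Filter.atTop (nhds 0) := by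
    simpa [div_mul_div_comm, sq] using h2.mul h2
  have : Filter.Tendsto h Filter.atTop
      (nhds ((1 / 4) * (0 - 0) - (3 / 4) * (0 + 0))) :=
    (((h1s.sub h2s).const_mul (1 / 4)).sub ((h1.add h2).const_mul (3 / 4)))
  simpa using this

lemma F_eq (n : ℕ) : F n = (3 / 2) * (1 / ((n : ℝ) + 2) ^ 2) + (h n - h (n + 1)) := by
  have p1 : ((n : ℝ) + 1) ≠ 0 := by positivity
  have p2 : ((n : ℝ) + 2) ≠ 0 := by positivity
  have p3 : ((n : ℝ) + 3) ≠ 0 := by positivity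
  simp only [F, h, Nat.cast_add, Nat.cast_one]
  field_simp
  ring

lemma summable_inv_sq2 : Summable (fun n : ℕ => 1 / ((n : ℝ) + 2) ^ 2) := by
  have := (summable_nat_add_iff 2).2 hasSum_zeta_two.summable
  exact this.congr fun n => by push_cast; ring

lemma summable_F : Summable F := by
  refine Summable.of_nonneg_of_le
    (fun n => by simp only [F]; positivity) (fun n => ?_) summable_inv_sq2
  rw [F, div_le_div_iff₀ (by positivity) (by positivity)]
  have h1 : (1 : ℝ) ≤ ((n : ℝ) + 1) ^ 2 * ((n : ℝ) + 3) ^ 2 := by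
    nlinarith [Nat.cast_nonneg (α := ℝ) n]
  nlinarith [sq_nonneg ((n : ℝ) + 2), h1]

lemma hasSum_F : HasSum F (Real.pi ^ 2 / 4 - 39 / 16) := by
  have h0 : HasSum (fun n : ℕ => (1 : ℝ) / (n : ℝ) ^ 2) (Real.pi ^ 2 / 6) :=
    hasSum_zeta_two
  have h2 : HasSum (fun n : ℕ => (1 : ℝ) / ((n : ℝ) + 2) ^ 2) (Real.pi ^ 2 / 6 - 1) := by
    have := (hasSum_nat_add_iff'
      (f := fun n : ℕ => (1 : ℝ) / (n : ℝ) ^ 2) 2).2 h0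
    simpa [Finset.sum_range_succ] using this
  have hb : HasSum (fun n : ℕ => (3 / 2) * (1 / ((n : ℝ) + 2) ^ 2))
      (Real.pi ^ 2 / 4 - 3 / 2) := by
    have := h2.mul_left (3 / 2)
    convert this using 1
    exacts [rfl, by ring]
  -- telescoping part
  have hT : HasSum (fun n : ℕ => h n - h (n + 1)) (-15 / 16) := by
    have hTsum : Summable (fun n : ℕ => h n - h (n + 1)) := by
      have heq : (fun n : ℕ => h n - h (n + 1))
          = fun n => F n - (3 / 2) * (1 / ((n : ℝ) + 2) ^ 2) := by
        funext n; rw [F_eq n]; ring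
      rw [heq]
      exact summable_F.sub (summable_inv_sq2.mul_left _)
    refine hTsum.hasSum_iff_tendsto_nat.2 ?_
    have key : ∀ N : ℕ, ∑ n ∈ Finset.range N, (h n - h (n + 1)) = h 0 - h N := by
      intro N
      induction N with
      | zero => simp
      | succ k ih => rw [Finset.sum_range_succ, ih]; ring
    simp only [key]
    have hlim : Filter.Tendsto (fun N : ℕ => h 0 - h N) Filter.atTop (nhds (h 0 - 0)) :=
      tendsto_const_nhds.sub h_tendsto
    have h0v : h 0 = -15 / 16 := by norm_num [h]
    simpa [h0v] using hlim
  have hsum := hb.add hT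
  have heq : (fun n : ℕ => (3 / 2) * (1 / ((n : ℝ) + 2) ^ 2) + (h n - h (n + 1))) = F := by
    funext n; rw [F_eq n]
  rw [heq] at hsum
  convert hsum using 1
  ring

/-- The full function on `ℤ`; it is `0` at `m = -1, 0, 1` by division by zero. -/
noncomputable def G (m : ℤ) : ℝ :=
  1 / ((1 - (m : ℝ)) ^ 2 * (m : ℝ) ^ 2 * (1 + (m : ℝ)) ^ 2)

lemma hasSum_G : HasSum G (Real.pi ^ 2 / 2 - 39 / 8) := by
  have hFpos : (fun n : ℕ => G ((n : ℤ) + 1 + 1)) = F := by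
    funext n
    simp only [G, F]
    push_cast
    rw [show (1 - ((n : ℝ) + 1 + 1)) ^ 2 = ((n : ℝ) + 1) ^ 2 by ring,
      show ((n : ℝ) + 1 + 1) = (n : ℝ) + 2 by ring,
      show (1 + ((n : ℝ) + 2)) ^ 2 = ((n : ℝ) + 3) ^ 2 by ring]
  have hFneg : (fun n : ℕ => G (-(((n : ℤ) + 1) + 1))) = F := by
    funext n
    simp only [G, F]
    push_cast
    rw [show (1 - (-((n : ℝ) + 1 + 1))) ^ 2 = ((n : ℝ) + 3) ^ 2 by ring,
      show (-((n : ℝ) + 1 + 1)) ^ 2 = ((n : ℝ) + 2) ^ 2 by ring,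
      show (1 + (-((n : ℝ) + 1 + 1))) ^ 2 = ((n : ℝ) + 1) ^ 2 by ring]
    ring
  have hpos : HasSum (fun n : ℕ => G ((n : ℤ) + 1)) (Real.pi ^ 2 / 4 - 39 / 16) := by
    have h1 : HasSum (fun n : ℕ => G (((n : ℕ) + 1 : ℕ) + 1)) (Real.pi ^ 2 / 4 - 39 / 16) := by
      have : (fun n : ℕ => G ((((n : ℕ) + 1 : ℕ) : ℤ) + 1)) = F := by
        funext n
        have : ((((n : ℕ) + 1 : ℕ) : ℤ) + 1) = ((n : ℤ) + 1 + 1) := by push_cast; ring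
        rw [this, ← hFpos]
      rw [this]; exact hasSum_F
    have := (hasSum_nat_add_iff (f := fun n : ℕ => G ((n : ℤ) + 1)) 1).1 h1
    simpa [G] using this
  have hneg : HasSum (fun n : ℕ => G (-((n : ℤ) + 1))) (Real.pi ^ 2 / 4 - 39 / 16) := by
    have h1 : HasSum (fun n : ℕ => G (-(((((n : ℕ) + 1 : ℕ)) : ℤ) + 1)))
        (Real.pi ^ 2 / 4 - 39 / 16) := by
      have : (fun n : ℕ => G (-(((((n : ℕ) + 1 : ℕ)) : ℤ) + 1))) = F := by
        funext n
        have : (-(((((n : ℕ) + 1 : ℕ)) : ℤ) + 1)) = -(((n : ℤ) + 1) + 1) := by push_cast; ring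
        rw [this, ← hFneg]
      rw [this]; exact hasSum_F
    have := (hasSum_nat_add_iff (f := fun n : ℕ => G (-((n : ℤ) + 1))) 1).1 h1
    simpa [G] using this
  have := hpos.of_add_one_of_neg_add_one hneg
  have hG0 : G 0 = 0 := by norm_num [G]
  rw [hG0] at this
  convert this using 1
  ring

end Statement19Aux

open Statement19Aux in
/-- the sum `Σ_{m∈ℤ, m∉{−1,0,1}} 1/((1−m)²m²(1+m)²)` converges
absolutely and equals `π²/2 − 39/8`. -/
theorem statement19 :
    Summable (fun m : {m : ℤ // m ≠ -1 ∧ m ≠ 0 ∧ m ≠ 1} =>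
      1 / ((1 - (m.1 : ℝ)) ^ 2 * (m.1 : ℝ) ^ 2 * (1 + (m.1 : ℝ)) ^ 2)) ∧
    ∑' m : {m : ℤ // m ≠ -1 ∧ m ≠ 0 ∧ m ≠ 1},
        1 / ((1 - (m.1 : ℝ)) ^ 2 * (m.1 : ℝ) ^ 2 * (1 + (m.1 : ℝ)) ^ 2) =
      Real.pi ^ 2 / 2 - 39 / 8 := by
  have hsupp : Function.support G ⊆ {m : ℤ | m ≠ -1 ∧ m ≠ 0 ∧ m ≠ 1} := by
    intro m hm
    simp only [Function.mem_support] at hm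
    refine ⟨?_, ?_, ?_⟩ <;> rintro rfl <;> apply hm <;> norm_num [G]
  have key : HasSum (fun m : {m : ℤ // m ≠ -1 ∧ m ≠ 0 ∧ m ≠ 1} =>
      1 / ((1 - (m.1 : ℝ)) ^ 2 * (m.1 : ℝ) ^ 2 * (1 + (m.1 : ℝ)) ^ 2))
      (Real.pi ^ 2 / 2 - 39 / 8) :=
    (hasSum_subtype_iff_of_support_subset hsupp).2 hasSum_G
  exact ⟨key.summable, key.tsum_eq⟩
end
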